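/- Let r ∈ [0,1), θ ∈ ℝ, and ṙ, θ̇ ∈ ℝ. Suppose that for every integer n ≥ 1 the equation ṙ·(2rⁿ − r^{2n}·cos(nθ) − cos(nθ)) = −r·(1 − r^{2n})·θ̇·sin(nθ) holds. Then ṙ = 0, and moreover at least one of the following holds: (1) r ≠ 0 and sin(nθ) = 0 for all n ≥ 1 (equivalently θ is an integer multiple of π); (2) r ≠ 0 and θ̇ = 0; (3) r = 0. -/
import Mathlib

open Filter Topology Real

/-- Degeneracy trichotomy for the multiplier identities. -/
theorem stmt_0 (r θ rdot θdot : ℝ) (hr0 : 0 ≤ r) (hr1 : r < 1)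
    (h : ∀ n : ℕ, 1 ≤ n →
      rdot * (2 * r ^ n - r ^ (2 * n) * Real.cos (n * θ) - Real.cos (n * θ)) =
        - (r * (1 - r ^ (2 * n)) * θdot * Real.sin (n * θ))) :
    rdot = 0 ∧
      ((r ≠ 0 ∧ ∀ n : ℕ, 1 ≤ n → Real.sin (n * θ) = 0) ∨
        (r ≠ 0 ∧ θdot = 0) ∨ r = 0) := by
  by_cases hr : r = 0
  · subst hr
    -- identities simplify to rdot * cos(nθ) = 0
    have hc : ∀ n : ℕ, 1 ≤ n → rdot * Real.cos (n * θ) = 0 := by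
      intro n hn
      have := h n hn
      rw [zero_pow (by omega), zero_pow (by omega)] at this
      linarith
    have hrd : rdot = 0 := by
      by_contra hrd
      have h1 : Real.cos ((1:ℕ) * θ) = 0 := by
        have := hc 1 le_rfl
        rcases mul_eq_zero.mp this with h | h
        · exact absurd h hrd
        · exact h
      have h2 : Real.cos ((2:ℕ) * θ) = 0 := by
        have := hc 2 (by norm_num)
        rcases mul_eq_zero.mp this with h | h
        · exact absurd h hrd
        · exact h
      have e1 : Real.cos θ = 0 := by simpa using h1
      have e2 : Real.cos (2 * θ) = 0 := by
        have : ((2:ℕ):ℝ) * θ = 2 * θ := by push_cast; ring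
        rwa [this] at h2
      rw [Real.cos_two_mul, e1] at e2
      norm_num at e2
    exact ⟨hrd, Or.inr (Or.inr rfl)⟩
  · by_cases hs : Real.sin θ = 0
    · -- sin(nθ) = 0 for all n, and rdot = 0 from n = 2
      have hsn : ∀ n : ℕ, Real.sin (n * θ) = 0 := by
        intro n
        induction n with
        | zero => simp
        | succ k ih =>
          have : ((k+1:ℕ):ℝ) * θ = (k:ℝ) * θ + θ := by push_cast; ring
          rw [this, Real.sin_add, ih, hs]
          ring
      have hcos2 : Real.cos ((2:ℕ) * θ) = 1 := by
        have : ((2:ℕ):ℝ) * θ = θ + θ := by push_cast; ring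
        rw [this, Real.cos_add]
        have h1 : Real.sin θ ^ 2 + Real.cos θ ^ 2 = 1 := Real.sin_sq_add_cos_sq θ
        rw [hs] at h1 ⊢
        nlinarith
      have h2 := h 2 (by norm_num)
      rw [hcos2, hsn 2] at h2
      have hrd : rdot = 0 := by
        have hr2 : r ^ 2 < 1 := by nlinarith
        have : rdot * (2 * r ^ 2 - r ^ 4 - 1) = 0 := by
          have : r ^ (2 * 2) = r ^ 4 := by norm_num
          rw [this] at h2; linarith
        have hne : 2 * r ^ 2 - r ^ 4 - 1 ≠ 0 := by nlinarith [sq_nonneg (1 - r^2)]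
        exact (mul_eq_zero.mp this).resolve_right hne
      exact ⟨hrd, Or.inl ⟨hr, fun n _ => hsn n⟩⟩
    · -- main case: limit argument
      set c : ℝ := r * θdot with hc
      set a : ℕ → ℝ := fun n => rdot * Real.cos (n * θ) - c * Real.sin (n * θ) with ha
      set b : ℕ → ℝ := fun n => rdot * Real.sin (n * θ) + c * Real.cos (n * θ) with hb
      have ha_eq : ∀ n : ℕ, 1 ≤ n →
          a n = 2 * rdot * r ^ n - rdot * r ^ (2*n) * Real.cos (n * θ)
              - c * r ^ (2*n) * Real.sin (n * θ) := by
        intro n hn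
        have := h n hn
        simp only [ha, hc]
        nlinarith [this]
      have hrn : Tendsto (fun n : ℕ => (2 * |rdot| + |rdot| + |c|) * r ^ n) atTop (𝓝 0) := by
        have := tendsto_pow_atTop_nhds_zero_of_lt_one hr0 hr1
        simpa using this.const_mul (2 * |rdot| + |rdot| + |c|)
      have ha0 : Tendsto a atTop (𝓝 0) := by
        refine squeeze_zero_norm' ?_ hrn
        filter_upwards [eventually_ge_atTop 1] with n hn
        rw [ha_eq n hn]
        have hrpow : 0 ≤ r ^ n := pow_nonneg hr0 n
        have hr1n : r ^ n ≤ 1 := pow_le_one₀ hr0 hr1.le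
        have h2n : r ^ (2*n) = (r ^ n)^2 := by rw [← pow_mul]; ring_nf
        have hcb : |Real.cos (n * θ)| ≤ 1 := Real.abs_cos_le_one _
        have hsb : |Real.sin (n * θ)| ≤ 1 := Real.abs_sin_le_one _
        have key : |2 * rdot * r ^ n - rdot * r ^ (2*n) * Real.cos (n * θ)
            - c * r ^ (2*n) * Real.sin (n * θ)|
            ≤ 2 * |rdot| * r ^ n + |rdot| * r ^ n + |c| * r ^ n := by
          have t1 : |2 * rdot * r ^ n| = 2 * |rdot| * r ^ n := by
            rw [abs_mul, abs_mul, abs_of_nonneg hrpow]; norm_num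
          have t2 : |rdot * r ^ (2*n) * Real.cos (n * θ)| ≤ |rdot| * r ^ n := by
            rw [abs_mul, abs_mul, abs_of_nonneg (pow_nonneg hr0 _)]
            have : r ^ (2*n) ≤ r ^ n := by rw [h2n]; nlinarith
            calc |rdot| * r ^ (2*n) * |Real.cos (n*θ)| ≤ |rdot| * r ^ (2*n) * 1 := by
                  apply mul_le_mul_of_nonneg_left hcb (by positivity)
              _ ≤ |rdot| * r ^ n := by rw [mul_one]; exact mul_le_mul_of_nonneg_left this (abs_nonneg _)
          have t3 : |c * r ^ (2*n) * Real.sin (n * θ)| ≤ |c| * r ^ n := by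
            rw [abs_mul, abs_mul, abs_of_nonneg (pow_nonneg hr0 _)]
            have : r ^ (2*n) ≤ r ^ n := by rw [h2n]; nlinarith
            calc |c| * r ^ (2*n) * |Real.sin (n*θ)| ≤ |c| * r ^ (2*n) * 1 := by
                  apply mul_le_mul_of_nonneg_left hsb (by positivity)
              _ ≤ |c| * r ^ n := by rw [mul_one]; exact mul_le_mul_of_nonneg_left this (abs_nonneg _)
          calc |2 * rdot * r ^ n - rdot * r ^ (2*n) * Real.cos (n * θ)
              - c * r ^ (2*n) * Real.sin (n * θ)|
              ≤ |2 * rdot * r ^ n| + |rdot * r ^ (2*n) * Real.cos (n * θ)|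
                + |c * r ^ (2*n) * Real.sin (n * θ)| := by
                exact (abs_sub _ _).trans (by gcongr; exact abs_sub _ _)
            _ ≤ 2 * |rdot| * r ^ n + |rdot| * r ^ n + |c| * r ^ n := by
                rw [t1]; gcongr
        calc ‖2 * rdot * r ^ n - rdot * r ^ (2*n) * Real.cos (n * θ)
            - c * r ^ (2*n) * Real.sin (n * θ)‖
            ≤ 2 * |rdot| * r ^ n + |rdot| * r ^ n + |c| * r ^ n := key
          _ = (2 * |rdot| + |rdot| + |c|) * r ^ n := by ring
      -- recurrence: a (n+2) - a n = -2 sin θ * b (n+1)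
      have hrec : ∀ n : ℕ, a (n+2) - a n = -2 * Real.sin θ * b (n+1) := by
        intro n
        simp only [ha, hb]
        have e2 : ((n+2:ℕ):ℝ) * θ = ((n+1:ℕ):ℝ) * θ + θ := by push_cast; ring
        have e0 : ((n:ℕ):ℝ) * θ = ((n+1:ℕ):ℝ) * θ - θ := by push_cast; ring
        rw [e2, e0, Real.cos_add, Real.sin_add, Real.cos_sub, Real.sin_sub]
        ring
      have hb0 : Tendsto b atTop (𝓝 0) := by
        have hshift : Tendsto (fun n => a (n+2)) atTop (𝓝 0) :=
          ha0.comp (tendsto_add_atTop_nat 2)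
        have hdiff : Tendsto (fun n => a (n+2) - a n) atTop (𝓝 0) := by
          simpa using hshift.sub ha0
        have : Tendsto (fun n => b (n+1)) atTop (𝓝 0) := by
          have h2s : (-2 : ℝ) * Real.sin θ ≠ 0 := by
            simp [hs]
          have := hdiff.const_mul ((-2 * Real.sin θ)⁻¹)
          simp only [mul_zero] at this
          convert this using 1
          funext n
          rw [hrec n]
          field_simp
        rwa [← tendsto_add_atTop_iff_nat 1]
      have hconst : ∀ n : ℕ, a n ^ 2 + b n ^ 2 = rdot ^ 2 + c ^ 2 := by
        intro n
        simp only [ha, hb]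
        have := Real.sin_sq_add_cos_sq ((n:ℝ) * θ)
        nlinarith [this]
      have hlim : Tendsto (fun n => a n ^ 2 + b n ^ 2) atTop (𝓝 0) := by
        have := (ha0.pow 2).add (hb0.pow 2)
        simpa using this
      have hzero : rdot ^ 2 + c ^ 2 = 0 := by
        have hconst' : Tendsto (fun _ : ℕ => rdot ^ 2 + c ^ 2) atTop (𝓝 (rdot ^ 2 + c ^ 2)) :=
          tendsto_const_nhds
        have : Tendsto (fun n => a n ^ 2 + b n ^ 2) atTop (𝓝 (rdot ^ 2 + c ^ 2)) := by
          simpa only [hconst] using hconst'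
        exact tendsto_nhds_unique this hlim
      have hrd : rdot = 0 := by nlinarith [sq_nonneg rdot, sq_nonneg c]
      have hcz : c = 0 := by nlinarith [sq_nonneg rdot, sq_nonneg c]
      have hθd : θdot = 0 := by
        rcases mul_eq_zero.mp (hc ▸ hcz) with h | h
        · exact absurd h hr
        · exact h
      exact ⟨hrd, Or.inr (Or.inl ⟨hr, hθd⟩)⟩
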